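/- Local Wirtinger estimate for quadrature: for a continuously differentiable function p on [0,1] and the partition by midpoints y_j = (x_j+x_{j+1})/2, Σ_{j=1}^r ∫_{y_{j-1}}^{y_j} |p(x) − p(x_j)|² dx ≤ (δ²/π²) ∫_0^1 |p'(x)|² dx, where δ = max_j (x_{j+1}−x_j). -/

import Mathlib

open Real MeasureTheory intervalIntegral Filter

lemma wirt_core (a b : ℝ) (hab : a ≤ b) (f f' : ℝ → ℝ)
    (hderiv : ∀ t ∈ Set.Icc a b, HasDerivAt f (f' t) t)
    (hcont : ContinuousOn f' (Set.Icc a b)) (hfa : f a = 0)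
    (c : ℝ) (hc : 0 < c) (hcb : c * (b - a) < π / 2) :
    c ^ 2 * ∫ t in a..b, f t ^ 2 ≤ ∫ t in a..b, f' t ^ 2 := by
  set m : ℝ → ℝ := fun t => c * Real.tan (c * (b - t)) with hm_def
  have hcos : ∀ t ∈ Set.Icc a b, 0 < Real.cos (c * (b - t)) := by
    intro t ht
    apply Real.cos_pos_of_mem_Ioo
    constructor
    · nlinarith [ht.2, Real.pi_pos]
    · nlinarith [ht.1]
  have hm : ∀ t ∈ Set.Icc a b, HasDerivAt m (-c ^ 2 - (m t) ^ 2) t := by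
    intro t ht
    have inner : HasDerivAt (fun s => c * (b - s)) (c * (-1)) t :=
      ((hasDerivAt_id t).const_sub b).const_mul c
    have htan := (Real.hasDerivAt_tan (hcos t ht).ne').comp t inner
    have h2 := htan.const_mul c
    refine h2.congr_deriv ?_
    symm
    have hco := (hcos t ht).ne'
    simp only [hm_def]
    rw [Real.tan_eq_sin_div_cos]
    field_simp
    nlinarith [Real.sin_sq_add_cos_sq (c * (b - t))]
  set F : ℝ → ℝ := fun t => m t * f t ^ 2 with hF_def
  have hF : ∀ t ∈ Set.Icc a b,
      HasDerivAt F (f' t ^ 2 - c ^ 2 * f t ^ 2 - (f' t - m t * f t) ^ 2) t := by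
    intro t ht
    have h1 := (hm t ht).mul ((hderiv t ht).pow 2)
    refine h1.congr_deriv ?_
    rw [Pi.pow_apply]
    ring
  have hfc : ContinuousOn f (Set.Icc a b) := fun t ht =>
    (hderiv t ht).continuousAt.continuousWithinAt
  have hmc : ContinuousOn m (Set.Icc a b) := fun t ht =>
    (hm t ht).continuousAt.continuousWithinAt
  have hGc : ContinuousOn
      (fun t => f' t ^ 2 - c ^ 2 * f t ^ 2 - (f' t - m t * f t) ^ 2) (Set.Icc a b) := by
    apply ContinuousOn.sub
    apply ContinuousOn.sub
    · exact hcont.pow 2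
    · exact (continuousOn_const.mul (hfc.pow 2))
    · exact ((hcont.sub (hmc.mul hfc)).pow 2)
  have hGint : IntervalIntegrable
      (fun t => f' t ^ 2 - c ^ 2 * f t ^ 2 - (f' t - m t * f t) ^ 2) volume a b := by
    apply ContinuousOn.intervalIntegrable
    rwa [Set.uIcc_of_le hab]
  have hftc := intervalIntegral.integral_eq_sub_of_hasDerivAt
    (fun t ht => hF t (by rwa [Set.uIcc_of_le hab] at ht)) hGint
  have hFb : F b = 0 := by simp [hF_def, hm_def]
  have hFa : F a = 0 := by simp [hF_def, hfa]
  rw [hFb, hFa, sub_zero] at hftc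
  have hint1 : IntervalIntegrable (fun t => f' t ^ 2) volume a b := by
    apply ContinuousOn.intervalIntegrable; rw [Set.uIcc_of_le hab]; exact hcont.pow 2
  have hint2 : IntervalIntegrable (fun t => c ^ 2 * f t ^ 2) volume a b := by
    apply ContinuousOn.intervalIntegrable; rw [Set.uIcc_of_le hab]
    exact continuousOn_const.mul (hfc.pow 2)
  have hint3 : IntervalIntegrable (fun t => (f' t - m t * f t) ^ 2) volume a b := by
    apply ContinuousOn.intervalIntegrable; rw [Set.uIcc_of_le hab]
    exact (hcont.sub (hmc.mul hfc)).pow 2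
  rw [intervalIntegral.integral_sub (hint1.sub hint2) hint3,
    intervalIntegral.integral_sub hint1 hint2, intervalIntegral.integral_const_mul] at hftc
  have hnn : 0 ≤ ∫ t in a..b, (f' t - m t * f t) ^ 2 :=
    intervalIntegral.integral_nonneg hab (fun t _ => sq_nonneg _)
  linarith

lemma wirt_left (a b : ℝ) (hab : a ≤ b) (f f' : ℝ → ℝ)
    (hderiv : ∀ t ∈ Set.Icc a b, HasDerivAt f (f' t) t)
    (hcont : ContinuousOn f' (Set.Icc a b)) (hfa : f a = 0) :
    π ^ 2 * ∫ t in a..b, f t ^ 2 ≤ (2 * (b - a)) ^ 2 * ∫ t in a..b, f' t ^ 2 := by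
  rcases eq_or_lt_of_le hab with rfl | hlt
  · simp
  set I := ∫ t in a..b, f t ^ 2 with hI
  set K := ∫ t in a..b, f' t ^ 2 with hK
  set c0 : ℝ := π / (2 * (b - a)) with hc0
  have hba : 0 < b - a := by linarith
  have hpi := Real.pi_pos
  have hc0pos : 0 < c0 := by positivity
  have key : ∀ c, 0 < c → c < c0 → c ^ 2 * I ≤ K := by
    intro c hc hcc
    apply wirt_core a b hab f f' hderiv hcont hfa c hc
    calc c * (b - a) < c0 * (b - a) := by nlinarith
    _ = π / 2 := by rw [hc0]; field_simp
  have hlim : Tendsto (fun c : ℝ => c ^ 2 * I) (nhdsWithin c0 (Set.Iio c0)) (nhds (c0 ^ 2 * I)) := by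
    apply Tendsto.mono_left _ nhdsWithin_le_nhds
    exact (Continuous.tendsto (by continuity) c0)
  have hev : ∀ᶠ c in nhdsWithin c0 (Set.Iio c0), (fun c : ℝ => c ^ 2 * I) c ≤ K := by
    filter_upwards [Ioo_mem_nhdsLT hc0pos] with c hc
    exact key c hc.1 hc.2
  have hfin : c0 ^ 2 * I ≤ K := le_of_tendsto hlim hev
  have : c0 ^ 2 = π ^ 2 / (2 * (b - a)) ^ 2 := by rw [hc0, div_pow]
  rw [this] at hfin
  rw [div_mul_eq_mul_div, div_le_iff₀ (by positivity)] at hfin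
  nlinarith [hfin]

lemma wirt_right (a b : ℝ) (hab : a ≤ b) (f f' : ℝ → ℝ)
    (hderiv : ∀ t ∈ Set.Icc a b, HasDerivAt f (f' t) t)
    (hcont : ContinuousOn f' (Set.Icc a b)) (hfb : f b = 0) :
    π ^ 2 * ∫ t in a..b, f t ^ 2 ≤ (2 * (b - a)) ^ 2 * ∫ t in a..b, f' t ^ 2 := by
  set g : ℝ → ℝ := fun t => f (a + b - t) with hg
  set g' : ℝ → ℝ := fun t => -f' (a + b - t) with hg'
  have hmem : ∀ t ∈ Set.Icc a b, a + b - t ∈ Set.Icc a b := by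
    intro t ht; exact ⟨by linarith [ht.2], by linarith [ht.1]⟩
  have hgderiv : ∀ t ∈ Set.Icc a b, HasDerivAt g (g' t) t := by
    intro t ht
    have inner : HasDerivAt (fun s : ℝ => a + b - s) (-1) t := (hasDerivAt_id t).const_sub (a + b)
    have := (hderiv (a + b - t) (hmem t ht)).comp t inner
    refine this.congr_deriv ?_
    simp [hg']
  have hgcont : ContinuousOn g' (Set.Icc a b) := by
    apply ContinuousOn.neg
    exact hcont.comp ((continuous_const.sub continuous_id).continuousOn) hmem
  have hga : g a = 0 := by simp [hg, hfb]
  have h := wirt_left a b hab g g' hgderiv hgcont hga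
  have e1 : (∫ t in a..b, g t ^ 2) = ∫ t in a..b, f t ^ 2 := by
    have := intervalIntegral.integral_comp_sub_left (a := a) (b := b) (fun u => f u ^ 2) (a + b)
    simpa [hg] using this
  have e2 : (∫ t in a..b, g' t ^ 2) = ∫ t in a..b, f' t ^ 2 := by
    have := intervalIntegral.integral_comp_sub_left (a := a) (b := b) (fun u => f' u ^ 2) (a + b)
    simp only [hg', neg_sq]
    simpa using this
  rw [e1, e2] at h
  exact h

lemma wirt_interval (a c b δ : ℝ) (h1 : a ≤ c) (h2 : c ≤ b)
    (hd1 : 2 * (c - a) ≤ δ) (hd2 : 2 * (b - c) ≤ δ) (f f' : ℝ → ℝ)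
    (hderiv : ∀ t ∈ Set.Icc a b, HasDerivAt f (f' t) t)
    (hcont : ContinuousOn f' (Set.Icc a b)) (hfc : f c = 0) :
    ∫ t in a..b, f t ^ 2 ≤ δ ^ 2 / π ^ 2 * ∫ t in a..b, f' t ^ 2 := by
  have hab : a ≤ b := h1.trans h2
  have hsub1 : Set.Icc a c ⊆ Set.Icc a b := Set.Icc_subset_Icc le_rfl h2
  have hsub2 : Set.Icc c b ⊆ Set.Icc a b := Set.Icc_subset_Icc h1 le_rfl
  have hL := wirt_right a c h1 f f' (fun t ht => hderiv t (hsub1 ht)) (hcont.mono hsub1) hfc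
  have hR := wirt_left c b h2 f f' (fun t ht => hderiv t (hsub2 ht)) (hcont.mono hsub2) hfc
  have hnn1 : 0 ≤ ∫ t in a..c, f' t ^ 2 := integral_nonneg h1 (fun t _ => sq_nonneg _)
  have hnn2 : 0 ≤ ∫ t in c..b, f' t ^ 2 := integral_nonneg h2 (fun t _ => sq_nonneg _)
  have hfcont : ContinuousOn f (Set.Icc a b) := fun t ht =>
    (hderiv t ht).continuousAt.continuousWithinAt
  have int_f2 : ∀ u v : ℝ, Set.uIcc u v ⊆ Set.Icc a b →
      IntervalIntegrable (fun t => f t ^ 2) volume u v := fun u v h =>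
    ((hfcont.mono h).pow 2).intervalIntegrable
  have int_f'2 : ∀ u v : ℝ, Set.uIcc u v ⊆ Set.Icc a b →
      IntervalIntegrable (fun t => f' t ^ 2) volume u v := fun u v h =>
    ((hcont.mono h).pow 2).intervalIntegrable
  have hu1 : Set.uIcc a c ⊆ Set.Icc a b := by rw [Set.uIcc_of_le h1]; exact hsub1
  have hu2 : Set.uIcc c b ⊆ Set.Icc a b := by rw [Set.uIcc_of_le h2]; exact hsub2
  have e1 := intervalIntegral.integral_add_adjacent_intervals (int_f2 a c hu1) (int_f2 c b hu2)
  have e2 := intervalIntegral.integral_add_adjacent_intervals (int_f'2 a c hu1) (int_f'2 c b hu2)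
  have hδ0 : 0 ≤ δ := le_trans (by nlinarith) hd1
  have key : π ^ 2 * ∫ t in a..b, f t ^ 2 ≤ δ ^ 2 * ∫ t in a..b, f' t ^ 2 := by
    rw [← e1, ← e2]
    have hsq1 : (2 * (c - a)) ^ 2 ≤ δ ^ 2 := by nlinarith
    have hsq2 : (2 * (b - c)) ^ 2 ≤ δ ^ 2 := by nlinarith
    have t1 := mul_le_mul_of_nonneg_right hsq1 hnn1
    have t2 := mul_le_mul_of_nonneg_right hsq2 hnn2
    linarith
  have hπ : (0:ℝ) < π ^ 2 := by positivity
  rw [div_mul_eq_mul_div, le_div_iff₀ hπ]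
  linarith

/-- Local Wirtinger estimate for quadrature: for `p ∈ C¹([0,1])` and the midpoints
`y_j = (x_j + x_{j+1})/2`,
`Σ_j ∫_{y_{j−1}}^{y_j} |p(t) − p(x_j)|² dt ≤ (δ²/π²) ∫_0^1 |p'(t)|² dt`. -/
theorem local_wirtinger_quadrature (r : ℕ) (x y : ℕ → ℝ) (δ : ℝ) (hr : 1 ≤ r)
    (hmono : ∀ j, 1 ≤ j → j < r → x j < x (j + 1))
    (hx1 : x 1 = 0) (hxr : x r = 1)
    (hx0 : x 0 = -x 1) (hxr1 : x (r + 1) = 2 - x r)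
    (hy : ∀ j ≤ r, y j = (x j + x (j + 1)) / 2)
    (hδ : ∀ j ≤ r, x (j + 1) - x j ≤ δ)
    (p p' : ℝ → ℝ)
    (hderiv : ∀ t ∈ Set.Icc (0:ℝ) 1, HasDerivAt p (p' t) t)
    (hcont : ContinuousOn p' (Set.Icc (0:ℝ) 1)) :
    ∑ j ∈ Finset.Icc 1 r, (∫ t in (y (j - 1))..(y j), (p t - p (x j)) ^ 2) ≤
      δ ^ 2 / Real.pi ^ 2 * ∫ t in (0:ℝ)..1, (p' t) ^ 2 := by
  have hx0' : x 0 = 0 := by rw [hx0, hx1]; ring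
  have mono0 : ∀ j, j ≤ r → x j ≤ x (j + 1) := by
    intro j hj
    rcases Nat.eq_zero_or_pos j with rfl | hj1
    · rw [hx0', hx1]
    rcases lt_or_eq_of_le hj with h | rfl
    · exact (hmono j hj1 h).le
    · rw [hxr1, hxr]; norm_num
  have hchain : ∀ i j, i ≤ j → j ≤ r + 1 → x i ≤ x j := by
    intro i j hij hjr
    induction j with
    | zero => rw [Nat.le_zero.mp hij]
    | succ n ih =>
      rcases Nat.lt_or_ge i (n + 1) with h | h
      · exact le_trans (ih (by omega) (by omega)) (mono0 n (by omega))
      · have : i = n + 1 := by omega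
        subst this; rfl
  have hlow : ∀ j, j ≤ r + 1 → 0 ≤ x j := by
    intro j hj
    have := hchain 0 j (Nat.zero_le _) hj
    rwa [hx0'] at this
  have hupp : ∀ j, j ≤ r + 1 → x j ≤ 1 := by
    intro j hj
    have := hchain j (r + 1) hj le_rfl
    rw [hxr1, hxr] at this; linarith
  have hδ0 : 0 ≤ δ := le_trans (by linarith [mono0 1 hr]) (hδ 1 hr)
  -- per-interval estimate
  have perj : ∀ j ∈ Finset.Icc 1 r,
      (∫ t in (y (j - 1))..(y j), (p t - p (x j)) ^ 2) ≤
        δ ^ 2 / π ^ 2 * ∫ t in (y (j - 1))..(y j), p' t ^ 2 := by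
    intro j hjmem
    obtain ⟨hj1, hj2⟩ := Finset.mem_Icc.mp hjmem
    have yjm : y (j - 1) = (x (j - 1) + x j) / 2 := by
      have := hy (j - 1) (by omega)
      rwa [show j - 1 + 1 = j by omega] at this
    have yj : y j = (x j + x (j + 1)) / 2 := hy j hj2
    have hA : x (j - 1) ≤ x j := by
      have := mono0 (j - 1) (by omega)
      rwa [show j - 1 + 1 = j by omega] at this
    have hB : x j ≤ x (j + 1) := mono0 j hj2
    have h1 : y (j - 1) ≤ x j := by rw [yjm]; linarith
    have h2 : x j ≤ y j := by rw [yj]; linarith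
    have ha0 : 0 ≤ y (j - 1) := by
      rw [yjm]; have := hlow (j - 1) (by omega); have := hlow j (by omega); linarith
    have hb1 : y j ≤ 1 := by
      rw [yj]; have := hupp j (by omega); have := hupp (j + 1) (by omega); linarith
    have hsub : Set.Icc (y (j - 1)) (y j) ⊆ Set.Icc (0:ℝ) 1 := Set.Icc_subset_Icc ha0 hb1
    have hd1 : 2 * (x j - y (j - 1)) ≤ δ := by
      rcases Nat.eq_or_lt_of_le hj1 with h | h
      · rw [yjm, show j - 1 = 0 by omega, hx0', ← h, hx1]; linarith
      · have := hδ (j - 1) (by omega)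
        rw [show j - 1 + 1 = j by omega] at this
        rw [yjm]; linarith
    have hd2 : 2 * (y j - x j) ≤ δ := by
      have := hδ j hj2; rw [yj]; linarith
    exact wirt_interval (y (j - 1)) (x j) (y j) δ h1 h2 hd1 hd2
      (fun t => p t - p (x j)) p'
      (fun t ht => (hderiv t (hsub ht)).sub_const _)
      (hcont.mono hsub) (sub_self _)
  -- telescoping sum of the right-hand sides
  have hy0 : y 0 = 0 := by rw [hy 0 (Nat.zero_le _), hx0', hx1]; norm_num
  have hyr : y r = 1 := by rw [hy r le_rfl, hxr1, hxr]; norm_num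
  have hyin : ∀ k, k ≤ r → 0 ≤ y k ∧ y k ≤ 1 := by
    intro k hk
    rw [hy k hk]
    constructor
    · have := hlow k (by omega); have := hlow (k + 1) (by omega); linarith
    · have := hupp k (by omega); have := hupp (k + 1) (by omega); linarith
  have hymono : ∀ k, k < r → y k ≤ y (k + 1) := by
    intro k hk
    rw [hy k (by omega), hy (k + 1) (by omega)]
    have h1 := mono0 k (by omega)
    have h2 := mono0 (k + 1) (by omega)
    linarith
  have hint : ∀ k, k < r → IntervalIntegrable (fun t => p' t ^ 2) volume (y k) (y (k + 1)) := by
    intro k hk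
    apply ContinuousOn.intervalIntegrable
    apply (hcont.pow 2).mono
    rw [Set.uIcc_of_le (hymono k hk)]
    exact Set.Icc_subset_Icc (hyin k (by omega)).1 (hyin (k + 1) (by omega)).2
  have htel : ∑ i ∈ Finset.range r, (∫ t in (y i)..(y (i + 1)), p' t ^ 2) =
      ∫ t in (0:ℝ)..1, p' t ^ 2 := by
    rw [intervalIntegral.sum_integral_adjacent_intervals hint, hy0, hyr]
  have hsum : ∀ g : ℕ → ℝ, ∑ j ∈ Finset.Icc 1 r, g j = ∑ i ∈ Finset.range r, g (i + 1) := by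
    intro g
    rw [← Finset.Ico_add_one_right_eq_Icc, Finset.sum_Ico_eq_sum_range]
    simp [add_comm]
  calc ∑ j ∈ Finset.Icc 1 r, (∫ t in (y (j - 1))..(y j), (p t - p (x j)) ^ 2)
      ≤ ∑ j ∈ Finset.Icc 1 r, δ ^ 2 / π ^ 2 * ∫ t in (y (j - 1))..(y j), p' t ^ 2 :=
        Finset.sum_le_sum perj
    _ = δ ^ 2 / π ^ 2 * ∑ j ∈ Finset.Icc 1 r, ∫ t in (y (j - 1))..(y j), p' t ^ 2 :=
        (Finset.mul_sum _ _ _).symm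
    _ = δ ^ 2 / π ^ 2 * ∑ i ∈ Finset.range r, ∫ t in (y i)..(y (i + 1)), p' t ^ 2 := by
        rw [hsum]; simp only [Nat.add_sub_cancel]
    _ = δ ^ 2 / π ^ 2 * ∫ t in (0:ℝ)..1, p' t ^ 2 := by rw [htel]
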